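/- Suppose M : [0,T) → ℝ is locally Lipschitz, M(0) > 0, and for a.e. t: M'(t) ≥ (7ε/4)·M(t)² − K, where K > 0 and ε > 0 satisfy (7ε/4)·M(0)² − K ≥ (ε/4)·M(0)², i.e., (3ε/2)·M(0)² ≥ K. Then M is nondecreasing and satisfies M'(t) ≥ (ε/4)·M(t)² for a.e. t on [0,T). -/

import Mathlib

open MeasureTheory Real Filter Set Topology

/-- FTC for Lipschitz functions with a.e. differentiability. -/
lemma lip_ftc {L : NNReal} {M : ℝ → ℝ} {a b b' : ℝ} (hab : a ≤ b) (hbb' : b < b')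
    (hlip : LipschitzOnWith L M (Set.Icc a b'))
    (hdiff : ∀ᵐ t ∂(volume.restrict (Set.Ioc a b)), DifferentiableAt ℝ M t) :
    M b - M a = ∫ t in a..b, deriv M t := by
  rcases eq_or_lt_of_le hab with rfl | hab'
  · simp
  have hMcont : ContinuousOn M (Set.Icc a b') := hlip.continuousOn
  set h : ℕ → ℝ := fun n => (b' - b) / (n + 1) with hh
  have hpos : ∀ n, 0 < h n := fun n => div_pos (by linarith) (by positivity)
  have hle : ∀ n, h n ≤ b' - b := fun n => by
    rw [hh]
    refine div_le_self (by linarith) (by push_cast; linarith [Nat.cast_nonneg (α := ℝ) n])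
  have h0 : Tendsto h atTop (𝓝 0) := by
    have := tendsto_one_div_add_atTop_nhds_zero_nat.const_mul (b' - b)
    simpa [hh, mul_one_div, mul_zero, div_eq_mul_inv] using this
  set F : ℕ → ℝ → ℝ := fun n t => (M (t + h n) - M t) / h n with hF
  -- integrability of M on subintervals of [a, b']
  have hint : ∀ x y : ℝ, a ≤ x → x ≤ y → y ≤ b' → IntervalIntegrable M volume x y := by
    intro x y hx hxy hy
    apply ContinuousOn.intervalIntegrable
    apply hMcont.mono
    rw [Set.uIcc_of_le hxy]
    exact Set.Icc_subset_Icc hx hy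
  -- key endpoint limit
  have key : ∀ x : ℝ, a ≤ x → x ≤ b →
      Tendsto (fun n => (∫ t in x..(x + h n), M t) / h n) atTop (𝓝 (M x)) := by
    intro x hax hxb
    have hxb' : ∀ n, x + h n ≤ b' := fun n => by linarith [hle n, hxb]
    have e1 : ∀ n, (∫ t in x..(x + h n), M t) / h n - M x
        = (∫ t in x..(x + h n), (M t - M x)) / h n := by
      intro n
      rw [intervalIntegral.integral_sub (hint x (x + h n) hax (by linarith [hpos n]) (hxb' n))
        intervalIntegrable_const, intervalIntegral.integral_const]
      have hne : h n ≠ 0 := ne_of_gt (hpos n)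
      field_simp
      rw [add_sub_cancel_left, smul_eq_mul]
    have e2 : ∀ n, |(∫ t in x..(x + h n), (M t - M x)) / h n| ≤ (L : ℝ) * h n := by
      intro n
      have hb1 : ∀ t ∈ Set.uIoc x (x + h n), ‖M t - M x‖ ≤ (L : ℝ) * h n := by
        intro t ht
        rw [Set.uIoc_of_le (by linarith [hpos n])] at ht
        have htmem : t ∈ Set.Icc a b' := ⟨le_trans hax ht.1.le, le_trans ht.2 (hxb' n)⟩
        have hxmem : x ∈ Set.Icc a b' := ⟨hax, by linarith [hxb' n, hpos n]⟩
        have := hlip.dist_le_mul t htmem x hxmem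
        rw [Real.dist_eq, Real.dist_eq] at this
        calc ‖M t - M x‖ ≤ (L : ℝ) * |t - x| := this
          _ ≤ (L : ℝ) * h n := by
              apply mul_le_mul_of_nonneg_left _ (NNReal.coe_nonneg L)
              rw [abs_of_pos (by linarith [ht.1])]
              linarith [ht.2]
      have := intervalIntegral.norm_integral_le_of_norm_le_const hb1
      rw [abs_div, abs_of_pos (hpos n)]
      rw [div_le_iff₀ (hpos n)]
      calc |∫ t in x..(x + h n), (M t - M x)| ≤ ((L : ℝ) * h n) * |x + h n - x| := this
        _ = (L : ℝ) * h n * h n := by rw [add_sub_cancel_left, abs_of_pos (hpos n)]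
    have hz : Tendsto (fun n => (∫ t in x..(x + h n), M t) / h n - M x) atTop (𝓝 0) := by
      apply squeeze_zero_norm (fun n => ?_) (by simpa using h0.const_mul (L : ℝ))
      rw [Real.norm_eq_abs, e1 n]
      exact e2 n
    have := hz.add_const (M x)
    simpa using this
  -- claim 1: integral of difference quotient
  have claim1 : ∀ n, ∫ t in a..b, F n t
      = (∫ t in b..(b + h n), M t) / h n - (∫ t in a..(a + h n), M t) / h n := by
    intro n
    have hMn : IntervalIntegrable (fun t => M (t + h n)) volume a b := by
      apply ContinuousOn.intervalIntegrable
      apply hMcont.comp (Continuous.continuousOn (by continuity))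
      intro t ht
      rw [Set.uIcc_of_le hab] at ht
      show t + h n ∈ Set.Icc a b'
      exact ⟨by linarith [ht.1, hpos n], by linarith [ht.2, hle n]⟩
    have hMab : IntervalIntegrable M volume a b := hint a b le_rfl hab (by linarith)
    have e3 : ∫ t in a..b, F n t = ((∫ t in a..b, M (t + h n)) - ∫ t in a..b, M t) / h n := by
      rw [hF]
      simp only
      rw [intervalIntegral.integral_div, intervalIntegral.integral_sub hMn hMab]
    have e4 : (∫ t in a..b, M (t + h n)) = ∫ t in (a + h n)..(b + h n), M t :=
      intervalIntegral.integral_comp_add_right (f := M) (h n)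
    have i1 : (∫ t in a..(a + h n), M t) + (∫ t in (a + h n)..(b + h n), M t)
        = ∫ t in a..(b + h n), M t :=
      intervalIntegral.integral_add_adjacent_intervals
        (hint a (a + h n) le_rfl (by linarith [hpos n]) (by linarith [hle n]))
        (hint (a + h n) (b + h n) (by linarith [hpos n]) (by linarith) (by linarith [hle n]))
    have i2 : (∫ t in a..b, M t) + (∫ t in b..(b + h n), M t) = ∫ t in a..(b + h n), M t :=
      intervalIntegral.integral_add_adjacent_intervals hMab
        (hint b (b + h n) hab (by linarith [hpos n]) (by linarith [hle n]))
    rw [e3, e4]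
    have : (∫ t in (a + h n)..(b + h n), M t) - ∫ t in a..b, M t
        = (∫ t in b..(b + h n), M t) - ∫ t in a..(a + h n), M t := by linarith
    rw [this, sub_div]
  -- dominated convergence
  have hIoc : Set.uIoc a b = Set.Ioc a b := Set.uIoc_of_le hab
  have hdiff' : ∀ᵐ t ∂(volume : Measure ℝ), t ∈ Set.uIoc a b → DifferentiableAt ℝ M t := by
    rw [hIoc]
    exact (ae_restrict_iff' measurableSet_Ioc).mp hdiff
  have lim2 : Tendsto (fun n => ∫ t in a..b, F n t) atTop (𝓝 (∫ t in a..b, deriv M t)) := by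
    apply intervalIntegral.tendsto_integral_filter_of_dominated_convergence
      (bound := fun _ => (L : ℝ))
    · apply Eventually.of_forall
      intro n
      apply ContinuousOn.aestronglyMeasurable _ measurableSet_uIoc
      rw [hIoc]
      apply ContinuousOn.div_const
      apply ContinuousOn.sub
      · apply hMcont.comp (Continuous.continuousOn (by continuity))
        intro t ht
        show t + h n ∈ Set.Icc a b'
        exact ⟨by linarith [ht.1, hpos n], by linarith [ht.2, hle n]⟩
      · exact hMcont.mono (fun t ht => ⟨ht.1.le, by linarith [ht.2]⟩)
    · apply Eventually.of_forall
      intro n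
      apply Eventually.of_forall
      intro t ht
      rw [hIoc] at ht
      have htmem : t ∈ Set.Icc a b' := ⟨ht.1.le, by linarith [ht.2]⟩
      have htmem' : t + h n ∈ Set.Icc a b' := ⟨by linarith [ht.1, hpos n], by linarith [ht.2, hle n]⟩
      have := hlip.dist_le_mul (t + h n) htmem' t htmem
      rw [Real.dist_eq, Real.dist_eq, add_sub_cancel_left, abs_of_pos (hpos n)] at this
      rw [hF]
      simp only [Real.norm_eq_abs, abs_div, abs_of_pos (hpos n)]
      rw [div_le_iff₀ (hpos n)]
      calc |M (t + h n) - M t| ≤ (L : ℝ) * h n := this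
        _ = (L : ℝ) * h n := rfl
    · exact intervalIntegrable_const
    · filter_upwards [hdiff'] with t ht hmem
      have hd := (ht hmem).hasDerivAt
      rw [hasDerivAt_iff_tendsto_slope] at hd
      have hseq : Tendsto (fun n => t + h n) atTop (𝓝[≠] t) := by
        apply tendsto_nhdsWithin_of_tendsto_nhds_of_eventually_within
        · simpa using (tendsto_const_nhds (x := t)).add h0
        · exact Eventually.of_forall fun n => by
            simp [ne_of_gt (hpos n)]
      have := hd.comp hseq
      apply this.congr
      intro n
      simp [Function.comp, slope_def_field, hF]
  have lim1 : Tendsto (fun n => ∫ t in a..b, F n t) atTop (𝓝 (M b - M a)) := by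
    have heq : (fun n => ∫ t in a..b, F n t)
        = fun n => (∫ t in b..(b + h n), M t) / h n - (∫ t in a..(a + h n), M t) / h n :=
      funext claim1
    rw [heq]
    exact (key b hab le_rfl).sub (key a le_rfl hab)
  exact tendsto_nhds_unique lim1 lim2

set_option maxHeartbeats 1600000 in
/-- If M' ≥ (7ε/4)M² − K a.e. with M(0) > 0 and (3ε/2)M(0)² ≥ K, then M is
    nondecreasing on [0,T) and M' ≥ (ε/4)M² a.e. there. -/
theorem riccati_propagation (ε K T : ℝ) (hε : 0 < ε) (hK : 0 < K) (hT : 0 < T)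
    (M : ℝ → ℝ)
    (hlip : ∀ S : Set ℝ, IsCompact S → S ⊆ Set.Ico 0 T → ∃ L : NNReal, LipschitzOnWith L M S)
    (hM0 : 0 < M 0)
    (hinit : K ≤ (3 * ε / 2) * (M 0) ^ 2)
    (hineq : ∀ᵐ t ∂(volume.restrict (Set.Ico 0 T)),
      DifferentiableAt ℝ M t ∧ (7 * ε / 4) * (M t) ^ 2 - K ≤ deriv M t) :
    MonotoneOn M (Set.Ico 0 T) ∧
    (∀ᵐ t ∂(volume.restrict (Set.Ico 0 T)), (ε / 4) * (M t) ^ 2 ≤ deriv M t) := by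
  set c₀ := Real.sqrt (4 * K / (7 * ε)) with hc₀
  have hc₀sq : c₀ ^ 2 = 4 * K / (7 * ε) := Real.sq_sqrt (by positivity)
  have hc₀pos : 0 < c₀ := Real.sqrt_pos.mpr (by positivity)
  have hc₀lt : c₀ < M 0 := by
    have h1 : 4 * K / (7 * ε) < M 0 ^ 2 := by
      rw [div_lt_iff₀ (by positivity)]
      nlinarith
    calc c₀ < Real.sqrt (M 0 ^ 2) := Real.sqrt_lt_sqrt (by positivity) h1
      _ = M 0 := Real.sqrt_sq hM0.le
  set c₁ := (c₀ + M 0) / 2 with hc₁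
  have hc₀c₁ : c₀ < c₁ := by rw [hc₁]; linarith
  have hc₁M0 : c₁ < M 0 := by rw [hc₁]; linarith
  -- increment lemma
  have incr : ∀ a b : ℝ, 0 ≤ a → a ≤ b → b < T →
      (∀ s ∈ Set.Icc a b, c₀ < M s) → M a ≤ M b := by
    intro a b ha0 hab hbT hMc
    set b' := (b + T) / 2 with hb'
    have hb1 : b < b' := by rw [hb']; linarith
    have hb2 : b' < T := by rw [hb']; linarith
    obtain ⟨L, hL⟩ := hlip (Set.Icc a b') isCompact_Icc
      (fun x hx => ⟨le_trans ha0 hx.1, lt_of_le_of_lt hx.2 hb2⟩)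
    have hsub : Set.Ioc a b ⊆ Set.Ico 0 T :=
      fun x hx => ⟨le_trans ha0 hx.1.le, lt_of_le_of_lt hx.2 hbT⟩
    have hae : ∀ᵐ t ∂(volume.restrict (Set.Ioc a b)),
        DifferentiableAt ℝ M t ∧ (7 * ε / 4) * (M t) ^ 2 - K ≤ deriv M t :=
      ae_restrict_of_ae_restrict_of_subset hsub hineq
    have hft := lip_ftc hab hb1 hL (hae.mono fun t ht => ht.1)
    have hnn : ∀ᵐ t ∂(volume.restrict (Set.Ioc a b)), 0 ≤ deriv M t := by
      filter_upwards [hae, ae_restrict_mem measurableSet_Ioc] with t ht hmem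
      have h1 : c₀ ≤ M t := (hMc t (Set.Ioc_subset_Icc_self hmem)).le
      have h2 : 4 * K / (7 * ε) ≤ (M t) ^ 2 := by
        rw [← hc₀sq]; nlinarith
      rw [div_le_iff₀ (by positivity)] at h2
      nlinarith [ht.2]
    have hpos : 0 ≤ ∫ t in a..b, deriv M t := by
      rw [intervalIntegral.integral_of_le hab]
      exact setIntegral_nonneg_ae measurableSet_Ioc
        (by filter_upwards [(ae_restrict_iff' measurableSet_Ioc).mp hnn] with t ht; exact fun h => ht h)
    linarith
  -- barrier: M stays above c₁
  have lower : ∀ t ∈ Set.Ico (0:ℝ) T, ∀ s ∈ Set.Icc (0:ℝ) t, c₁ ≤ M s := by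
    intro t ht
    by_contra hcon
    push_neg at hcon
    obtain ⟨s₀, hs₀, hMs₀⟩ := hcon
    -- Lipschitz constant near [0, t]
    set t' := (t + T) / 2 with ht'
    have ht1 : t < t' := by rw [ht']; linarith [ht.2]
    have ht2 : t' < T := by rw [ht']; linarith [ht.2]
    obtain ⟨L, hL⟩ := hlip (Set.Icc 0 t') isCompact_Icc
      (fun x hx => ⟨hx.1, lt_of_le_of_lt hx.2 ht2⟩)
    set A := {s ∈ Set.Icc (0:ℝ) t | ∀ r ∈ Set.Icc (0:ℝ) s, c₁ ≤ M r} with hA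
    have hA0 : (0:ℝ) ∈ A := by
      refine ⟨⟨le_refl _, ht.1⟩, fun r hr => ?_⟩
      have : r = 0 := le_antisymm hr.2 hr.1
      rw [this]; linarith
    have hAne : A.Nonempty := ⟨0, hA0⟩
    have hbdd : BddAbove A := ⟨t, fun s hs => hs.1.2⟩
    set u := sSup A with hu
    have hu0 : 0 ≤ u := le_csSup hbdd hA0
    have hut : u ≤ t := csSup_le hAne fun s hs => hs.1.2
    -- every r ∈ [0, u] has c₁ ≤ M r
    have hub : ∀ r ∈ Set.Icc (0:ℝ) u, c₁ ≤ M r := by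
      intro r hr
      rcases lt_or_eq_of_le hr.2 with hru | hru
      · obtain ⟨s, hsA, hrs⟩ := exists_lt_of_lt_csSup hAne hru
        exact hsA.2 r ⟨hr.1, hrs.le⟩
      · -- r = u : approximate from the left
        subst hru
        rcases eq_or_lt_of_le hr.1 with h0r | h0r
        · rw [← h0r]; linarith
        · apply le_of_forall_pos_le_add
          intro η hη
          set δ := min (η / ((L : ℝ) + 1)) u with hδ
          have hδpos : 0 < δ := lt_min (by positivity) h0r
          have hδu : δ ≤ u := min_le_right _ _
          obtain ⟨s, hsA, hrs⟩ := exists_lt_of_lt_csSup hAne (show u - δ < u by linarith)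
          have hrδ : c₁ ≤ M (u - δ) := hsA.2 _ ⟨by linarith, hrs.le⟩
          have hmem1 : u - δ ∈ Set.Icc (0:ℝ) t' := ⟨by linarith, by linarith [hut, ht1]⟩
          have hmem2 : u ∈ Set.Icc (0:ℝ) t' := ⟨hu0, by linarith [hut, ht1]⟩
          have hdist := hL.dist_le_mul u hmem2 (u - δ) hmem1
          rw [Real.dist_eq, Real.dist_eq, show u - (u - δ) = δ by ring,
            abs_of_pos hδpos] at hdist
          have hLδ : (L : ℝ) * δ ≤ η := by
            have h4 : (L : ℝ) * δ ≤ (L : ℝ) * (η / ((L : ℝ) + 1)) :=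
              mul_le_mul_of_nonneg_left (min_le_left _ _) (NNReal.coe_nonneg L)
            have h5 : (L : ℝ) * (η / ((L : ℝ) + 1)) ≤ η := by
              rw [mul_div_assoc', div_le_iff₀ (by positivity)]
              nlinarith [NNReal.coe_nonneg L]
            linarith
          have h3 : M (u - δ) - M u ≤ (L : ℝ) * δ := by
            have := neg_abs_le (M u - M (u - δ))
            linarith [hdist]
          linarith
    have huA : u ∈ A := ⟨⟨hu0, hut⟩, hub⟩
    -- u < t since M s₀ < c₁
    have hult : u < t := by
      rcases lt_or_ge u s₀ with h | h
      · exact lt_of_lt_of_le h hs₀.2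
      · exact absurd (hub s₀ ⟨hs₀.1, h⟩) (not_le.mpr hMs₀)
    -- M u ≥ M 0
    have hMu : M 0 ≤ M u := incr 0 u le_rfl hu0 (lt_of_le_of_lt hut ht.2)
      (fun s hs => lt_of_lt_of_le hc₀c₁ (hub s hs))
    -- extend beyond u
    set δ := min ((M 0 - c₁) / ((L : ℝ) + 1)) (t - u) with hδ
    have hδpos : 0 < δ := lt_min (div_pos (by linarith) (by positivity)) (by linarith)
    have hnew : u + δ ∈ A := by
      refine ⟨⟨by linarith, by linarith [min_le_right ((M 0 - c₁) / ((L : ℝ) + 1)) (t - u)]⟩,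
        fun r hr => ?_⟩
      rcases le_or_gt r u with h | h
      · exact hub r ⟨hr.1, h⟩
      · have hrt : r ≤ t := le_trans hr.2 (by linarith [min_le_right ((M 0 - c₁) / ((L : ℝ) + 1)) (t - u)])
        have hmem1 : r ∈ Set.Icc (0:ℝ) t' := ⟨hr.1, by linarith⟩
        have hmem2 : u ∈ Set.Icc (0:ℝ) t' := ⟨hu0, by linarith⟩
        have hdist := hL.dist_le_mul r hmem1 u hmem2
        rw [Real.dist_eq, Real.dist_eq] at hdist
        have habs : |r - u| ≤ δ := by
          rw [abs_of_pos (by linarith)]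
          linarith [hr.2]
        have h2 : |M r - M u| ≤ (L : ℝ) * δ :=
          le_trans hdist (mul_le_mul_of_nonneg_left habs (NNReal.coe_nonneg L))
        have hLδ : (L : ℝ) * δ ≤ M 0 - c₁ := by
          have h4 : (L : ℝ) * δ ≤ (L : ℝ) * ((M 0 - c₁) / ((L : ℝ) + 1)) :=
            mul_le_mul_of_nonneg_left (min_le_left _ _) (NNReal.coe_nonneg L)
          have h5 : (L : ℝ) * ((M 0 - c₁) / ((L : ℝ) + 1)) ≤ M 0 - c₁ := by
            rw [mul_div_assoc', div_le_iff₀ (by positivity)]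
            nlinarith [NNReal.coe_nonneg L, hc₁M0]
          linarith
        have := neg_abs_le (M r - M u)
        linarith
    have := le_csSup hbdd hnew
    linarith
  -- conclusions
  have hMlb : ∀ t ∈ Set.Ico (0:ℝ) T, M 0 ≤ M t := by
    intro t ht
    exact incr 0 t le_rfl ht.1 ht.2
      (fun s hs => lt_of_lt_of_le hc₀c₁ (lower t ht s hs))
  constructor
  · intro x hx y hy hxy
    exact incr x y hx.1 hxy hy.2 (fun s hs => lt_of_lt_of_le hc₀c₁
      (lower y hy s ⟨le_trans hx.1 hs.1, hs.2⟩))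
  · filter_upwards [hineq, ae_restrict_mem measurableSet_Ico] with t ht hmem
    have h1 : M 0 ≤ M t := hMlb t hmem
    have h2 : M 0 ^ 2 ≤ M t ^ 2 := by nlinarith
    have h3 : K ≤ 3 * ε / 2 * M t ^ 2 := hinit.trans (by nlinarith [hε.le])
    nlinarith [ht.2]
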